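/- Let a > 0 and assume g(r;a) > 0 for all r ∈ (0,∞). Then the quotient w'(r;a)/w(r;a) converges as r → ∞, and its limit is either 0 or 1. -/

import Mathlib

open Real Set Filter MeasureTheory

/-- `f` is a solution of the profile equation with parameter `a`:
`f` is C¹ on `[0,∞)` with derivative `f'`, the map `r ↦ |f'(r)|^{p-2} f'(r)` is C¹ on `[0,∞)`
with derivative `F'`, the ODE
`(|f'|^{p-2}f')'(r) + ((N-1)/r)(|f'|^{p-2}f')(r) + f(r) - |f'(r)|^{p-1} = 0` holds for `r > 0`,
and `f 0 = a`, `f' 0 = 0`. -/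
def IsProfileSol (N : ℕ) (p a : ℝ) (f f' F' : ℝ → ℝ) : Prop :=
  (∀ r ∈ Ici (0:ℝ), HasDerivWithinAt f (f' r) (Ici 0) r) ∧
  ContinuousOn f' (Ici 0) ∧
  (∀ r ∈ Ici (0:ℝ), HasDerivWithinAt (fun s => |f' s| ^ (p - 2) * f' s) (F' r) (Ici 0) r) ∧
  ContinuousOn F' (Ici 0) ∧
  (∀ r, 0 < r →
    F' r + (((N : ℝ) - 1) / r) * (|f' r| ^ (p - 2) * f' r) + f r - |f' r| ^ (p - 1) = 0) ∧
  f 0 = a ∧ f' 0 = 0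

/-- `g(r;a) = -|f'(r;a)|^{p-2} f'(r;a)`. -/
noncomputable def gFun (p : ℝ) (f' : ℝ → ℝ) (r : ℝ) : ℝ := -(|f' r| ^ (p - 2) * f' r)

/-- `ρ(r) = r^{N-1} e^r`. -/
noncomputable def rho (N : ℕ) (r : ℝ) : ℝ := r ^ (N - 1) * Real.exp r

/-- the derivative of `ρ`. -/
noncomputable def rho' (N : ℕ) (r : ℝ) : ℝ :=
  (((N : ℝ) - 1) * r ^ (N - 2) + r ^ (N - 1)) * Real.exp r

/-- `w(r;a) = ρ(r) g(r;a)`. -/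
noncomputable def wFun (N : ℕ) (p : ℝ) (f' : ℝ → ℝ) (r : ℝ) : ℝ := rho N r * gFun p f' r

/-- the derivative `w'(r;a) = ρ'(r) g(r;a) + ρ(r) g'(r;a)`, where `g' = -F'`. -/
noncomputable def wDeriv (N : ℕ) (p : ℝ) (f' F' : ℝ → ℝ) (r : ℝ) : ℝ :=
  rho' N r * gFun p f' r - rho N r * F' r

/-- linear decay: if `h' ≤ -δ` on `[r1,∞)` then `h r ≤ h r1 - δ (r - r1)`. -/
lemma aux_decay {h h' : ℝ → ℝ} {r1 δ : ℝ}
    (hd : ∀ r ∈ Ici r1, HasDerivAt h (h' r) r)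
    (hδ : ∀ r ∈ Ici r1, h' r ≤ -δ) :
    ∀ r ∈ Ici r1, h r ≤ h r1 - δ * (r - r1) := by
  have hA : AntitoneOn (fun r => h r + δ * r) (Ici r1) := by
    apply antitoneOn_of_deriv_nonpos (convex_Ici r1)
    · exact fun r hr => ((hd r hr).continuousAt.add (by fun_prop)).continuousWithinAt
    · intro r hr
      rw [interior_Ici] at hr
      exact ((hd r (mem_Ici.2 (le_of_lt hr))).add ((hasDerivAt_id r).const_mul δ)).differentiableAt.differentiableWithinAt
    · intro r hr
      rw [interior_Ici] at hr
      have hD : HasDerivAt (fun r => h r + δ * r) (h' r + δ * 1) r :=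
        (hd r (mem_Ici.2 (le_of_lt hr))).add ((hasDerivAt_id r).const_mul δ)
      rw [hD.deriv]
      have := hδ r (mem_Ici.2 (le_of_lt hr))
      linarith
  intro r hr
  have := hA self_mem_Ici hr hr
  simp only at this
  linarith

/-- continuity limit: value at a closure point is `≤ C` if `h ≤ C` on the set. -/
lemma aux_le_closure {h : ℝ → ℝ} {K : Set ℝ} {s C : ℝ}
    (hc : ContinuousAt h s) (hs : s ∈ closure K) (hK : ∀ x ∈ K, h x ≤ C) : h s ≤ C := by
  have hne : (nhdsWithin s K).NeBot := mem_closure_iff_nhdsWithin_neBot.1 hs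
  have ht : Tendsto h (nhdsWithin s K) (nhds (h s)) := hc.continuousWithinAt
  exact le_of_tendsto ht (eventually_nhdsWithin_of_forall hK)

/-- eventual upper barrier. -/
lemma aux_barrier_upper {h h' : ℝ → ℝ} {r1 C δ : ℝ} (hδ : 0 < δ)
    (hd : ∀ r ∈ Ici r1, HasDerivAt h (h' r) r)
    (hC : ∀ r ∈ Ici r1, C < h r → h' r ≤ -δ) :
    ∀ᶠ r in atTop, h r ≤ C := by
  -- first find one point below C
  have step1 : ∃ r2, r1 ≤ r2 ∧ h r2 ≤ C := by
    by_contra hcon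
    push_neg at hcon
    have hall : ∀ r ∈ Ici r1, h' r ≤ -δ := fun r hr => hC r hr (hcon r hr)
    have hdec := aux_decay hd hall
    obtain ⟨r, hr, h3⟩ : ∃ r, r1 ≤ r ∧ δ * (r - r1) = h r1 - C + 1 := by
      refine ⟨r1 + (h r1 - C + 1) / δ, ?_, by field_simp; ring⟩
      have h0 : 0 ≤ (h r1 - C + 1) / δ :=
        div_nonneg (by have := hcon r1 le_rfl; linarith) hδ.le
      linarith
    have h1 := hdec r hr
    have h2 := hcon r hr
    linarith
  obtain ⟨r2, hr12, hr2⟩ := step1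
  rw [eventually_atTop]
  refine ⟨r2, fun r3 hr23 => ?_⟩
  by_contra hcon
  push_neg at hcon
  have hr23' : r2 < r3 := by
    rcases eq_or_lt_of_le hr23 with h | h
    · exact absurd (h ▸ hr2) (not_le.2 hcon)
    · exact h
  set K := {r ∈ Icc r2 r3 | h r ≤ C} with hK
  have hKne : K.Nonempty := ⟨r2, ⟨le_rfl, hr23⟩, hr2⟩
  have hKbd : BddAbove K := ⟨r3, fun x hx => hx.1.2⟩
  set s := sSup K with hs
  have hsmem : s ∈ Icc r2 r3 := by
    have : s ∈ closure K := csSup_mem_closure hKne hKbd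
    have : closure K ⊆ Icc r2 r3 := closure_minimal (fun x hx => hx.1) isClosed_Icc
    exact this (csSup_mem_closure hKne hKbd)
  have hsC : h s ≤ C := by
    refine aux_le_closure ?_ (csSup_mem_closure hKne hKbd) (fun x hx => hx.2)
    exact (hd s (le_trans hr12 hsmem.1)).continuousAt
  have hsr3 : s < r3 := lt_of_le_of_ne hsmem.2 (fun he => absurd (he ▸ hsC) (not_le.2 hcon))
  have hgt : ∀ r ∈ Ioc s r3, C < h r := by
    intro r hr
    by_contra hle
    push_neg at hle
    have : r ∈ K := ⟨⟨le_trans hsmem.1 hr.1.le, hr.2⟩, hle⟩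
    exact absurd (le_csSup hKbd this) (not_le.2 hr.1)
  have hA : AntitoneOn h (Icc s r3) := by
    apply antitoneOn_of_deriv_nonpos (convex_Icc s r3)
    · exact fun r hr => (hd r (le_trans hr12 (le_trans hsmem.1 hr.1))).continuousAt.continuousWithinAt
    · intro r hr
      rw [interior_Icc] at hr
      exact (hd r (le_trans hr12 (le_trans hsmem.1 hr.1.le))).differentiableAt.differentiableWithinAt
    · intro r hr
      rw [interior_Icc] at hr
      have hr1r : r1 ≤ r := le_trans hr12 (le_trans hsmem.1 hr.1.le)
      rw [(hd r hr1r).deriv]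
      have := hC r hr1r (hgt r ⟨hr.1, hr.2.le⟩)
      linarith
  have := hA ⟨le_rfl, hsr3.le⟩ ⟨hsr3.le, le_rfl⟩ hsr3.le
  have := hcon
  linarith [hgt r3 ⟨hsr3, le_rfl⟩]

/-- linear growth. -/
lemma aux_growth {h h' : ℝ → ℝ} {r1 δ : ℝ}
    (hd : ∀ r ∈ Ici r1, HasDerivAt h (h' r) r)
    (hδ : ∀ r ∈ Ici r1, δ ≤ h' r) :
    ∀ r ∈ Ici r1, h r1 + δ * (r - r1) ≤ h r := by
  intro r hr
  have := aux_decay (h := fun r => -h r) (h' := fun r => -h' r) (δ := δ)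
    (fun r hr => (hd r hr).neg) (fun r hr => by have := hδ r hr; simp; linarith) r hr
  linarith

/-- eventual lower barrier. -/
lemma aux_barrier_lower {h h' : ℝ → ℝ} {r1 C δ : ℝ} (hδ : 0 < δ)
    (hd : ∀ r ∈ Ici r1, HasDerivAt h (h' r) r)
    (hC : ∀ r ∈ Ici r1, h r < C → δ ≤ h' r) :
    ∀ᶠ r in atTop, C ≤ h r := by
  have := aux_barrier_upper (h := fun r => -h r) (h' := fun r => -h' r) (C := -C) hδ
    (fun r hr => (hd r hr).neg)
    (fun r hr hlt => by
      have h1 : h r < C := by simpa using hlt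
      have := hC r hr h1
      show -h' r ≤ -δ
      linarith)
  filter_upwards [this] with r hr
  have : -h r ≤ -C := hr
  linarith

/-- reflecting barrier: once above a level at which the derivative is positive, stay above. -/
lemma aux_stay_above {h h' : ℝ → ℝ} {r2 C : ℝ}
    (hd : ∀ r ∈ Ici r2, HasDerivAt h (h' r) r)
    (hstart : C ≤ h r2)
    (hlevel : ∀ r ∈ Ici r2, h r = C → 0 < h' r) :
    ∀ r ∈ Ici r2, C ≤ h r := by
  intro r3 hr3
  by_contra hcon
  push_neg at hcon
  have hr23 : r2 < r3 := by
    rcases eq_or_lt_of_le (mem_Ici.1 hr3) with h | h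
    · exact absurd (h ▸ hstart) (not_le.2 hcon)
    · exact h
  set K := {r ∈ Icc r2 r3 | C ≤ h r} with hK
  have hKne : K.Nonempty := ⟨r2, ⟨le_rfl, hr23.le⟩, hstart⟩
  have hKbd : BddAbove K := ⟨r3, fun x hx => hx.1.2⟩
  set s := sSup K with hs
  have hscl : s ∈ closure K := csSup_mem_closure hKne hKbd
  have hsmem : s ∈ Icc r2 r3 :=
    (closure_minimal (fun x (hx : x ∈ K) => hx.1) isClosed_Icc) hscl
  have hsC : C ≤ h s := by
    have := aux_le_closure (h := fun r => -h r) (C := -C)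
      ((hd s hsmem.1).continuousAt.neg) hscl (fun x hx => by simp; exact hx.2)
    linarith
  have hsr3 : s < r3 := lt_of_le_of_ne hsmem.2 (fun he => absurd (he ▸ hsC) (not_le.2 hcon))
  have hlt : ∀ r ∈ Ioc s r3, h r < C := by
    intro r hr
    by_contra hle
    push_neg at hle
    have : r ∈ K := ⟨⟨le_trans hsmem.1 hr.1.le, hr.2⟩, hle⟩
    exact absurd (le_csSup hKbd this) (not_le.2 hr.1)
  -- h s ≤ C from the right
  have hsC' : h s ≤ C := by
    have hclo : s ∈ closure (Ioc s r3) := by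
      rw [closure_Ioc hsr3.ne]; exact ⟨le_rfl, hsr3.le⟩
    exact aux_le_closure (hd s hsmem.1).continuousAt hclo (fun x hx => (hlt x hx).le)
  have hseq : h s = C := le_antisymm hsC' hsC
  have hpos : 0 < h' s := hlevel s hsmem.1 hseq
  -- slope argument
  have hslope : Tendsto (slope h s) (nhdsWithin s {s}ᶜ) (nhds (h' s)) :=
    hasDerivAt_iff_tendsto_slope.1 (hd s hsmem.1)
  have hne : (nhdsWithin s (Ioc s r3)).NeBot := by
    rw [← mem_closure_iff_nhdsWithin_neBot]
    rw [closure_Ioc hsr3.ne]; exact ⟨le_rfl, hsr3.le⟩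
  have hmono : nhdsWithin s (Ioc s r3) ≤ nhdsWithin s {s}ᶜ :=
    nhdsWithin_mono s (fun x hx => ne_of_gt hx.1)
  have hslope2 : Tendsto (slope h s) (nhdsWithin s (Ioc s r3)) (nhds (h' s)) :=
    hslope.mono_left hmono
  have hev : ∀ᶠ r in nhdsWithin s (Ioc s r3), 0 < slope h s r :=
    hslope2.eventually (eventually_gt_nhds hpos)
  obtain ⟨r, hrpos, hrmem⟩ := (hev.and (eventually_mem_nhdsWithin)).exists
  have hrs : s < r := hrmem.1
  rw [slope_def_field] at hrpos
  have hgt : h s < h r := by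
    have h2 : 0 < r - s := by linarith
    have h3 : (h r - h s) / (r - s) * (r - s) = h r - h s := div_mul_cancel₀ _ (ne_of_gt h2)
    nlinarith [mul_pos hrpos h2]
  have := hlt r hrmem
  rw [hseq] at hgt
  linarith

/-- a function antitone and bounded below on `[0,∞)` converges at infinity. -/
lemma aux_tendsto_antitone {f : ℝ → ℝ} {L0 : ℝ}
    (hmono : ∀ x y, 0 ≤ x → x ≤ y → f y ≤ f x)
    (hbd : ∀ x, 0 ≤ x → L0 ≤ f x) :
    ∃ L, L0 ≤ L ∧ (∀ r, 0 ≤ r → L ≤ f r) ∧ Tendsto f atTop (nhds L) := by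
  set L := sInf (f '' Ici 0) with hL
  have hne : (f '' Ici 0).Nonempty := ⟨f 0, 0, self_mem_Ici, rfl⟩
  have hbdd : BddBelow (f '' Ici 0) := ⟨L0, fun x ⟨r, hr, he⟩ => he ▸ hbd r hr⟩
  have hL0 : L0 ≤ L := le_csInf hne (fun x ⟨r, hr, he⟩ => he ▸ hbd r hr)
  have hLle : ∀ r, 0 ≤ r → L ≤ f r := fun r hr => csInf_le hbdd ⟨r, hr, rfl⟩
  refine ⟨L, hL0, hLle, tendsto_order.2 ⟨fun b hb => ?_, fun b hb => ?_⟩⟩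
  · rw [eventually_atTop]
    exact ⟨0, fun r hr => lt_of_lt_of_le hb (hLle r hr)⟩
  · obtain ⟨x, ⟨r0, hr0, he⟩, hxb⟩ := exists_lt_of_csInf_lt hne hb
    rw [eventually_atTop]
    exact ⟨r0, fun r hr => lt_of_le_of_lt (he ▸ hmono r0 r hr0 hr) hxb⟩

set_option maxHeartbeats 1000000 in
/-- if `g(·;a) > 0` on `(0,∞)`, then `w'(r;a)/w(r;a)` converges as `r → ∞`,
with limit `0` or `1`. -/
theorem stmt10 (N : ℕ) (hN : 2 ≤ N) (p : ℝ)
    (hp1 : 2 * (N : ℝ) / ((N : ℝ) + 1) < p) (hp2 : p < 2)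
    (a : ℝ) (ha : 0 < a)
    (f f' F' : ℝ → ℝ) (hf : IsProfileSol N p a f f' F')
    (hg : ∀ r, 0 < r → 0 < gFun p f' r) :
    ∃ L : ℝ, Filter.Tendsto (fun r => wDeriv N p f' F' r / wFun N p f' r)
        Filter.atTop (nhds L) ∧ (L = 0 ∨ L = 1) := by
  obtain ⟨hfd, hf'c, hFd, hF'c, hode, hf0, hf'0⟩ := hf
  have hN' : (2:ℝ) ≤ (N:ℝ) := by exact_mod_cast hN
  have hp1' : 1 < p := by
    have h43 : (4:ℝ)/3 ≤ 2 * (N:ℝ) / ((N:ℝ) + 1) := by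
      rw [div_le_div_iff₀ (by norm_num) (by linarith)]
      nlinarith
    linarith
  set g : ℝ → ℝ := fun r => gFun p f' r with hgdef
  have hgpos : ∀ r, 0 < r → 0 < g r := hg
  have h1 : ∀ r, 0 < r → f' r < 0 := by
    intro r hr
    rcases lt_trichotomy (f' r) 0 with h | h | h
    · exact h
    · exfalso
      have hgr := hgpos r hr
      have : g r = 0 := by simp [hgdef, gFun, h]
      linarith
    · exfalso
      have habs : 0 < |f' r| ^ (p-2) := Real.rpow_pos_of_pos (abs_pos.2 (ne_of_gt h)) _
      have hgr := hgpos r hr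
      have : g r < 0 := by
        simp only [hgdef, gFun, neg_neg]
        nlinarith
      linarith
  have h2 : ∀ r, 0 < r → g r = (-f' r) ^ (p - 1) := by
    intro r hr
    have h1r := h1 r hr
    have habs : |f' r| = -f' r := abs_of_neg h1r
    have hne : -f' r ≠ 0 := by linarith
    show -(|f' r| ^ (p-2) * f' r) = (-f' r) ^ (p - 1)
    rw [habs, show p - 1 = (p-2) + 1 by ring, Real.rpow_add_one hne]
    ring
  have hfD : ∀ r, 0 < r → HasDerivAt f (f' r) r :=
    fun r hr => (hfd r hr.le).hasDerivAt (Ici_mem_nhds hr)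
  have hgD0 : ∀ r, 0 < r → HasDerivAt g (-F' r) r :=
    fun r hr => (((hFd r hr.le).hasDerivAt (Ici_mem_nhds hr)).neg : _)
  set gd : ℝ → ℝ := fun r => f r - g r - (((N:ℝ)-1)/r) * g r with hgddef
  have hF'eq : ∀ r, 0 < r → -F' r = gd r := by
    intro r hr
    have hode' := hode r hr
    have habs : |f' r| = -f' r := abs_of_neg (h1 r hr)
    have e1 : |f' r| ^ (p-2) * f' r = -g r := by
      show _ = -(-(|f' r| ^ (p-2) * f' r)); ring
    have e2 : |f' r| ^ (p-1) = g r := by rw [habs, ← h2 r hr]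
    rw [e1, e2, mul_neg] at hode'
    show -F' r = f r - g r - (((N:ℝ)-1)/r) * g r
    linarith
  have hgD : ∀ r, 0 < r → HasDerivAt g (gd r) r :=
    fun r hr => hF'eq r hr ▸ hgD0 r hr
  have hNr : ∀ r : ℝ, 0 < r → 0 ≤ ((N:ℝ)-1)/r :=
    fun r hr => div_nonneg (by linarith) hr.le
  have hfcont : ContinuousOn f (Ici 0) := fun r hr => (hfd r hr).continuousWithinAt
  have hfanti : ∀ x y, 0 ≤ x → x ≤ y → f y ≤ f x := by
    have hA : AntitoneOn f (Ici 0) := by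
      apply antitoneOn_of_deriv_nonpos (convex_Ici 0) hfcont
      · intro x hx
        rw [interior_Ici] at hx
        exact (hfD x hx).differentiableAt.differentiableWithinAt
      · intro x hx
        rw [interior_Ici] at hx
        rw [(hfD x hx).deriv]
        exact (h1 x hx).le
    exact fun x y hx hxy => hA hx (le_trans hx hxy) hxy
  have hfpos : ∀ r, 0 ≤ r → 0 < f r := by
    have hstrict : StrictAntiOn f (Ici 0) := by
      apply strictAntiOn_of_deriv_neg (convex_Ici 0) hfcont
      intro x hx
      rw [interior_Ici] at hx
      rw [(hfD x hx).deriv]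
      exact h1 x hx
    by_contra hcon
    push_neg at hcon
    obtain ⟨r0, hr0, hfr0⟩ := hcon
    set r1 := r0 + 1 with hr1def
    have hr1pos : (0:ℝ) < r1 := by linarith
    have hfr1 : f r1 < 0 := by
      have := hstrict hr0 (by simp [hr1def]; linarith : r1 ∈ Ici (0:ℝ)) (by linarith)
      linarith
    set c := -f r1 with hcdef
    have hcpos : 0 < c := by simp [hcdef]; linarith
    have hgd_le : ∀ r ∈ Ici r1, gd r ≤ -c := by
      intro r hr
      have hrpos : 0 < r := lt_of_lt_of_le hr1pos hr
      have hfle : f r ≤ f r1 := hfanti r1 r hr1pos.le hr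
      have hg0 : 0 ≤ g r := (hgpos r hrpos).le
      have hc0' : 0 ≤ (((N:ℝ)-1)/r) * g r := mul_nonneg (hNr r hrpos) hg0
      show f r - g r - (((N:ℝ)-1)/r) * g r ≤ -c
      simp only [hcdef]
      linarith
    have hdec := aux_decay (fun r hr => hgD r (lt_of_lt_of_le hr1pos hr)) hgd_le
    obtain ⟨r, hr, h3⟩ : ∃ r, r1 ≤ r ∧ c * (r - r1) = g r1 + 1 := by
      refine ⟨r1 + (g r1 + 1) / c, ?_, by field_simp; ring⟩
      have h0 : 0 ≤ (g r1 + 1) / c :=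
        div_nonneg (by linarith [hgpos r1 hr1pos]) hcpos.le
      linarith
    have := hdec r hr
    have := hgpos r (lt_of_lt_of_le hr1pos hr)
    linarith
  obtain ⟨L, hL0, hLle, hLtend⟩ := aux_tendsto_antitone hfanti (fun x hx => (hfpos x hx).le)
  have hLzero : L = 0 := by
    by_contra hL
    have hLpos : 0 < L := lt_of_le_of_ne hL0 (Ne.symm hL)
    set r1 := max 1 (2*((N:ℝ)-1)) with hr1def
    have hr1pos : (0:ℝ) < r1 := lt_of_lt_of_le one_pos (le_max_left _ _)
    have hcsmall : ∀ r, r1 ≤ r → ((N:ℝ)-1)/r ≤ 1/2 := by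
      intro r hr
      have hrpos : 0 < r := lt_of_lt_of_le hr1pos hr
      rw [div_le_iff₀ hrpos]
      have : 2*((N:ℝ)-1) ≤ r := le_trans (le_max_right _ _) hr
      linarith
    have hbar := aux_barrier_lower (h := g) (h' := gd) (r1 := r1) (C := L/2) (δ := L/4)
      (by linarith) (fun r hr => hgD r (lt_of_lt_of_le hr1pos hr)) ?_
    swap
    · intro r hr hglt
      have hrpos : 0 < r := lt_of_lt_of_le hr1pos hr
      have hfge : L ≤ f r := hLle r hrpos.le
      have hg0 : 0 ≤ g r := (hgpos r hrpos).le
      have hcle := hcsmall r hr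
      have hprod : (((N:ℝ)-1)/r) * g r ≤ (1/2) * (L/2) :=
        mul_le_mul hcle hglt.le hg0 (by norm_num)
      show L/4 ≤ f r - g r - (((N:ℝ)-1)/r) * g r
      linarith
    obtain ⟨r2', hr2'⟩ := eventually_atTop.1 hbar
    set r2 := max r2' r1 with hr2def
    have hr2pos : 0 < r2 := lt_of_lt_of_le hr1pos (le_max_right _ _)
    set δ' := (L/2) ^ (p-1)⁻¹ with hδ'def
    have hδ'pos : 0 < δ' := Real.rpow_pos_of_pos (by linarith) _
    have hp1ne : p - 1 ≠ 0 := by linarith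
    have hf'le : ∀ r ∈ Ici r2, f' r ≤ -δ' := by
      intro r hr
      have hrpos : 0 < r := lt_of_lt_of_le hr2pos hr
      have hgge : L/2 ≤ g r := hr2' r (le_trans (le_max_left _ _) hr)
      by_contra hcon
      push_neg at hcon
      have hlt : -f' r < δ' := by linarith
      have h0le : 0 ≤ -f' r := by have := h1 r hrpos; linarith
      have := Real.rpow_lt_rpow h0le hlt (by linarith : 0 < p - 1)
      rw [← h2 r hrpos] at this
      rw [hδ'def, Real.rpow_inv_rpow (by linarith) hp1ne] at this
      linarith
    have hdec := aux_decay (fun r hr => hfD r (lt_of_lt_of_le hr2pos hr)) hf'le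
    obtain ⟨r, hr, h3⟩ : ∃ r, r2 ≤ r ∧ δ' * (r - r2) = f r2 + 1 := by
      refine ⟨r2 + (f r2 + 1) / δ', ?_, by field_simp; ring⟩
      have h0 : 0 ≤ (f r2 + 1) / δ' :=
        div_nonneg (by linarith [hfpos r2 hr2pos.le]) hδ'pos.le
      linarith
    have := hdec r hr
    have := hfpos r (le_trans hr2pos.le hr)
    linarith
  have hgto0 : Tendsto g atTop (nhds 0) := by
    rw [hLzero] at hLtend
    refine tendsto_order.2 ⟨fun b hb => ?_, fun b hb => ?_⟩
    · filter_upwards [eventually_ge_atTop 1] with r hr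
      exact lt_of_lt_of_le hb (hgpos r (by linarith)).le
    · set ε := b/3 with hεdef
      have hεpos : 0 < ε := by simp [hεdef]; linarith
      have hfev : ∀ᶠ r in atTop, f r < ε := hLtend.eventually (eventually_lt_nhds hεpos)
      obtain ⟨R0, hR0⟩ := eventually_atTop.1 (hfev.and (eventually_ge_atTop 1))
      set R := max R0 1 with hRdef
      have hRpos : (0:ℝ) < R := lt_of_lt_of_le one_pos (le_max_right _ _)
      have hbar := aux_barrier_upper (h := g) (h' := gd) (r1 := R) (C := 2*ε) (δ := ε)
        hεpos (fun r hr => hgD r (lt_of_lt_of_le hRpos hr)) ?_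
      swap
      · intro r hr hggt
        have hrpos : 0 < r := lt_of_lt_of_le hRpos hr
        have hfr : f r < ε := (hR0 r (le_trans (le_max_left _ _) hr)).1
        have hg0 : 0 ≤ g r := (hgpos r hrpos).le
        have hc0' : 0 ≤ (((N:ℝ)-1)/r) * g r := mul_nonneg (hNr r hrpos) hg0
        show f r - g r - (((N:ℝ)-1)/r) * g r ≤ -ε
        linarith
      filter_upwards [hbar] with r hr
      have : 2*ε < b := by simp [hεdef]; linarith
      linarith
  set ψ : ℝ → ℝ := fun r => (-f' r) / g r with hψdef
  have hψpos : ∀ r, 0 < r → 0 < ψ r :=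
    fun r hr => div_pos (by have := h1 r hr; linarith) (hgpos r hr)
  have hψ0 : Tendsto ψ atTop (nhds 0) := by
    set β := (p-1)⁻¹ - 1 with hβdef
    have hp1ne : p - 1 ≠ 0 := by linarith
    have hβpos : 0 < β := by
      have h01 : 0 < p - 1 := by linarith
      have h11 : p - 1 < 1 := by linarith
      have hinv : 1 < (p-1)⁻¹ := by
        nlinarith [mul_inv_cancel₀ hp1ne, inv_pos.2 h01]
      simp [hβdef]; linarith
    have hψeq : ∀ r, 0 < r → ψ r = g r ^ β := by
      intro r hr
      have h0le : 0 ≤ -f' r := by have := h1 r hr; linarith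
      have hf'eq : -f' r = g r ^ (p-1)⁻¹ := by
        rw [h2 r hr, Real.rpow_rpow_inv h0le hp1ne]
      show (-f' r) / g r = g r ^ β
      rw [hf'eq, hβdef, Real.rpow_sub (hgpos r hr), Real.rpow_one]
    have htend : Tendsto (fun r => g r ^ β) atTop (nhds 0) := by
      have := hgto0.rpow_const (p := β) (Or.inr hβpos.le)
      rwa [Real.zero_rpow (ne_of_gt hβpos)] at this
    refine htend.congr' ?_
    filter_upwards [eventually_ge_atTop 1] with r hr
    exact (hψeq r (by linarith)).symm
  set φ : ℝ → ℝ := fun r => f r / g r with hφdef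
  set φd : ℝ → ℝ := fun r => -ψ r - φ r * (φ r - 1 - ((N:ℝ)-1)/r) with hφddef
  have hφpos : ∀ r, 0 < r → 0 < φ r :=
    fun r hr => div_pos (hfpos r hr.le) (hgpos r hr)
  have hφD : ∀ r, 0 < r → HasDerivAt φ (φd r) r := by
    intro r hr
    have hgne : g r ≠ 0 := ne_of_gt (hgpos r hr)
    have hrne : r ≠ 0 := ne_of_gt hr
    have hD := (hfD r hr).div (hgD r hr) hgne
    have heq : φd r = (f' r * g r - f r * gd r) / g r ^ 2 := by
      show -((-f' r)/g r) - (f r / g r) * ((f r / g r) - 1 - ((N:ℝ)-1)/r)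
          = (f' r * g r - f r * (f r - g r - (((N:ℝ)-1)/r) * g r)) / g r ^ 2
      field_simp
    rw [heq]
    exact hD
  have hc0 : Tendsto (fun r : ℝ => ((N:ℝ)-1)/r) atTop (nhds 0) :=
    tendsto_const_nhds.div_atTop tendsto_id
  have hupper : ∀ ε, 0 < ε → ε < 1 → ∀ᶠ r in atTop, φ r ≤ 1 + ε := by
    intro ε hε hε1
    have hcev : ∀ᶠ r in atTop, ((N:ℝ)-1)/r < ε/2 := hc0.eventually (eventually_lt_nhds (by linarith))
    obtain ⟨R0, hR0⟩ := eventually_atTop.1 (hcev.and (eventually_ge_atTop 1))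
    set R := max R0 1 with hRdef
    have hRpos : (0:ℝ) < R := lt_of_lt_of_le one_pos (le_max_right _ _)
    apply aux_barrier_upper (h := φ) (h' := φd) (r1 := R) (C := 1 + ε) (δ := ε/2)
      (by linarith) (fun r hr => hφD r (lt_of_lt_of_le hRpos hr))
    intro r hr hφgt
    have hrpos : 0 < r := lt_of_lt_of_le hRpos hr
    have hc : ((N:ℝ)-1)/r < ε/2 := (hR0 r (le_trans (le_max_left _ _) hr)).1
    have hcnn : 0 ≤ ((N:ℝ)-1)/r := hNr r hrpos
    have hψr : 0 < ψ r := hψpos r hrpos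
    show -ψ r - φ r * (φ r - 1 - ((N:ℝ)-1)/r) ≤ -(ε/2)
    nlinarith [mul_le_mul_of_nonneg_left (show ε/2 ≤ φ r - 1 - ((N:ℝ)-1)/r by linarith)
      (show (0:ℝ) ≤ φ r by linarith),
      mul_le_mul_of_nonneg_right (show (1:ℝ) ≤ φ r by linarith) (show (0:ℝ) ≤ ε/2 by linarith)]
  have hdich : ∀ ε, 0 < ε → ε < 1/3 →
      (∀ᶠ r in atTop, φ r ≤ ε) ∨ (∀ᶠ r in atTop, 1 - ε ≤ φ r) := by
    intro ε hε hε3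
    set κ := ε*(1-ε)/2 with hκdef
    have hκpos : 0 < κ := by
      have : 0 < 1 - ε := by linarith
      simp only [hκdef]
      positivity
    have hψev : ∀ᶠ r in atTop, ψ r ≤ κ := hψ0.eventually (eventually_le_nhds hκpos)
    obtain ⟨R0, hR0⟩ := eventually_atTop.1 (hψev.and (eventually_ge_atTop 1))
    set R := max R0 1 with hRdef
    have hRpos : (0:ℝ) < R := lt_of_lt_of_le one_pos (le_max_right _ _)
    have hRfacts : ∀ r, R ≤ r → ψ r ≤ κ ∧ 0 < r := by
      intro r hr
      exact ⟨(hR0 r (le_trans (le_max_left _ _) hr)).1, lt_of_lt_of_le hRpos hr⟩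
    by_cases hA : ∃ r2, R ≤ r2 ∧ ε ≤ φ r2
    · obtain ⟨r2, hRr2, hφr2⟩ := hA
      have hr2pos : 0 < r2 := lt_of_lt_of_le hRpos hRr2
      -- stay above ε
      have hstay1 : ∀ r ∈ Ici r2, ε ≤ φ r := by
        apply aux_stay_above (fun r hr => hφD r (lt_of_lt_of_le hr2pos hr)) hφr2
        intro r hr heq
        obtain ⟨hψr, hrpos⟩ := hRfacts r (le_trans hRr2 hr)
        have hcnn : 0 ≤ ((N:ℝ)-1)/r := hNr r hrpos
        show 0 < -ψ r - φ r * (φ r - 1 - ((N:ℝ)-1)/r)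
        rw [heq]
        nlinarith [mul_nonneg hε.le hcnn]
      -- reach 1 - ε
      have hr3ex : ∃ r3, r2 ≤ r3 ∧ 1 - ε ≤ φ r3 := by
        by_contra hcon
        push_neg at hcon
        have hgrow := aux_growth (h := φ) (h' := φd) (r1 := r2) (δ := κ)
          (fun r hr => hφD r (lt_of_lt_of_le hr2pos hr)) ?_
        swap
        · intro r hr
          obtain ⟨hψr, hrpos⟩ := hRfacts r (le_trans hRr2 hr)
          have hlo : ε ≤ φ r := hstay1 r hr
          have hhi : φ r < 1 - ε := hcon r hr
          have hcnn : 0 ≤ ((N:ℝ)-1)/r := hNr r hrpos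
          show κ ≤ -ψ r - φ r * (φ r - 1 - ((N:ℝ)-1)/r)
          nlinarith [mul_nonneg (show (0:ℝ) ≤ φ r - ε by linarith)
            (show (0:ℝ) ≤ 1 - ε - φ r by linarith),
            mul_nonneg hcnn (show (0:ℝ) ≤ φ r by linarith)]
        have h1κ : 0 < 1/κ := one_div_pos.2 hκpos
        have hr2κ : r2 ≤ r2 + 1/κ := by linarith
        have hbig := hgrow (r2 + 1/κ) hr2κ
        have hcan : κ * (r2 + 1/κ - r2) = 1 := by field_simp; ring
        have hφlt := hcon (r2 + 1/κ) hr2κ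
        have hφge : ε ≤ φ r2 := hφr2
        linarith
      obtain ⟨r3, hr23, hφr3⟩ := hr3ex
      have hr3pos : 0 < r3 := lt_of_lt_of_le hr2pos hr23
      have hstay2 : ∀ r ∈ Ici r3, 1 - ε ≤ φ r := by
        apply aux_stay_above (fun r hr => hφD r (lt_of_lt_of_le hr3pos hr)) hφr3
        intro r hr heq
        obtain ⟨hψr, hrpos⟩ := hRfacts r (le_trans hRr2 (le_trans hr23 hr))
        have hcnn : 0 ≤ ((N:ℝ)-1)/r := hNr r hrpos
        show 0 < -ψ r - φ r * (φ r - 1 - ((N:ℝ)-1)/r)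
        rw [heq]
        nlinarith [mul_nonneg (show (0:ℝ) ≤ 1 - ε by linarith) hcnn]
      exact Or.inr (eventually_atTop.2 ⟨r3, hstay2⟩)
    · push_neg at hA
      exact Or.inl (eventually_atTop.2 ⟨R, fun r hr => (hA r hr).le⟩)
  have hquot : (fun r => wDeriv N p f' F' r / wFun N p f' r) =ᶠ[atTop] φ := by
    rw [EventuallyEq, eventually_atTop]
    refine ⟨1, fun r hr => ?_⟩
    have hr0 : 0 < r := by linarith
    have hrne : r ≠ 0 := ne_of_gt hr0
    have hρpos : 0 < rho N r := mul_pos (pow_pos hr0 _) (exp_pos r)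
    have hrho' : rho' N r = rho N r + (((N:ℝ)-1)/r) * rho N r := by
      simp only [rho, rho']
      have hexp : r ^ (N-1) = r ^ (N-2) * r := by
        rw [← pow_succ]
        congr 1
        omega
      rw [hexp]
      field_simp
      ring
    have hwd : wDeriv N p f' F' r = rho N r * f r := by
      show rho' N r * gFun p f' r - rho N r * F' r = rho N r * f r
      have hgg : gFun p f' r = g r := rfl
      have hF : F' r = -(f r - g r - (((N:ℝ)-1)/r) * g r) := by
        have := hF'eq r hr0
        show F' r = -(gd r)
        linarith
      rw [hgg, hF, hrho']
      ring
    have hw : wFun N p f' r = rho N r * g r := rfl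
    show wDeriv N p f' F' r / wFun N p f' r = f r / g r
    rw [hwd, hw, mul_div_mul_left _ _ (ne_of_gt hρpos)]
  by_cases hB : ∃ ε, 0 < ε ∧ ε < 1/3 ∧ ∀ᶠ r in atTop, 1 - ε ≤ φ r
  · obtain ⟨ε0, hε0p, hε03, hε0ev⟩ := hB
    refine ⟨1, Tendsto.congr' hquot.symm ?_, Or.inr rfl⟩
    refine tendsto_order.2 ⟨fun b hb => ?_, fun b hb => ?_⟩
    · -- b < 1 : eventually b < φ
      set ε := min ε0 ((1-b)/2) with hε
      have hεp : 0 < ε := lt_min hε0p (by linarith)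
      have hε3 : ε < 1/3 := lt_of_le_of_lt (min_le_left _ _) hε03
      rcases hdich ε hεp hε3 with hA | hBe
      · exfalso
        obtain ⟨r, hr1, hr2⟩ := (hA.and hε0ev).exists
        have : ε ≤ 1/3 := hε3.le
        have : (1:ℝ)/3 ≤ 1 - ε0 := by linarith
        linarith
      · filter_upwards [hBe] with r hr
        have : ε ≤ (1-b)/2 := min_le_right _ _
        linarith
    · -- b > 1 : eventually φ < b
      have hε : (0:ℝ) < min ((b-1)/2) (1/2) := lt_min (by linarith) (by norm_num)
      filter_upwards [hupper _ hε (lt_of_le_of_lt (min_le_right _ _) (by norm_num))] with r hr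
      have : min ((b-1)/2) (1/2) ≤ (b-1)/2 := min_le_left _ _
      linarith
  · push_neg at hB
    refine ⟨0, Tendsto.congr' hquot.symm ?_, Or.inl rfl⟩
    refine tendsto_order.2 ⟨fun b hb => ?_, fun b hb => ?_⟩
    · filter_upwards [eventually_ge_atTop 1] with r hr
      exact lt_trans hb (hφpos r (by linarith))
    · set ε := min (b/2) (1/4) with hε
      have hεp : 0 < ε := lt_min (by linarith) (by norm_num)
      have hε3 : ε < 1/3 := lt_of_le_of_lt (min_le_right _ _) (by norm_num)
      rcases hdich ε hεp hε3 with hA | hBe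
      · filter_upwards [hA] with r hr
        have : ε ≤ b/2 := min_le_left _ _
        linarith
      · exact absurd hBe (Filter.not_eventually.2 ((hB ε hεp hε3).mono fun x hx => not_le.2 hx))
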